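/- Lower bound of Theorem 4: for every state ρ and every ε ≥ 0, the smoothed max-relative entropy of coherence lower-bounds the one-shot coherence cost under MIO: C_max^ε(ρ) ≤ C_MIO^ε(ρ). -/

import Mathlib

open scoped Matrix ComplexOrder

namespace OneShot

variable {ι κ : Type*} [Fintype ι] [DecidableEq ι] [Fintype κ] [DecidableEq κ]

/-- A quantum state: a positive semidefinite matrix with unit trace. -/
def IsState (ρ : Matrix ι ι ℂ) : Prop := ρ.PosSemidef ∧ ρ.trace = 1

/-- An incoherent state: a state that is diagonal in the computational basis. -/
def IsIncoherent (ρ : Matrix ι ι ℂ) : Prop := IsState ρ ∧ ρ.IsDiag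

/-- The completely dephasing channel `Δ`. -/
def dephase (ρ : Matrix ι ι ℂ) : Matrix ι ι ℂ := Matrix.diagonal fun i => ρ i i

/-- The max-relative entropy of coherence
`C_max(ρ) = min_{δ ∈ 𝓘} D_max(ρ‖δ) = log₂ min {λ ≥ 0 | ∃ δ ∈ 𝓘, ρ ≤ λ δ}`. -/
noncomputable def Cmax (ρ : Matrix ι ι ℂ) : ℝ :=
  Real.logb 2 (sInf {l : ℝ | 0 ≤ l ∧ ∃ δ, IsIncoherent δ ∧ (l • δ - ρ).PosSemidef})

/-- `C_{Δ,max}(ρ) = log₂ min {λ ≥ 0 | ρ ≤ λ Δ(ρ)}`. -/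
noncomputable def CDmax (ρ : Matrix ι ι ℂ) : ℝ :=
  Real.logb 2 (sInf {l : ℝ | 0 ≤ l ∧ (l • dephase ρ - ρ).PosSemidef})

/-- Complete positivity of a linear map on matrices. -/
def CompletelyPositive (Λ : Matrix ι ι ℂ →ₗ[ℂ] Matrix κ κ ℂ) : Prop :=
  ∀ (k : ℕ) (M : Matrix (Fin k × ι) (Fin k × ι) ℂ), M.PosSemidef →
    (Matrix.of fun p q : Fin k × κ =>
      Λ (Matrix.of fun x y => M (p.1, x) (q.1, y)) p.2 q.2).PosSemidef

/-- Trace preservation. -/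
def TracePreserving (Λ : Matrix ι ι ℂ →ₗ[ℂ] Matrix κ κ ℂ) : Prop :=
  ∀ A, (Λ A).trace = A.trace

/-- A maximally incoherent operation (MIO): a CPTP map sending every incoherent state
to an incoherent state. -/
def IsMIO (Λ : Matrix ι ι ℂ →ₗ[ℂ] Matrix κ κ ℂ) : Prop :=
  CompletelyPositive Λ ∧ TracePreserving Λ ∧ ∀ δ, IsIncoherent δ → IsIncoherent (Λ δ)

/-- A dephasing-covariant incoherent operation (DIO): a CPTP map commuting with `Δ`. -/
def IsDIO (Λ : Matrix ι ι ℂ →ₗ[ℂ] Matrix ι ι ℂ) : Prop :=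
  CompletelyPositive Λ ∧ TracePreserving Λ ∧ ∀ ρ, Λ (dephase ρ) = dephase (Λ ρ)

/-- An incoherent-preserving (Kraus) operator: `K δ Kᴴ` is a nonnegative multiple of an
incoherent state, for every incoherent state `δ`. -/
def IncoherentPreserving (K : Matrix κ ι ℂ) : Prop :=
  ∀ δ : Matrix ι ι ℂ, IsIncoherent δ →
    ∃ c : ℝ, 0 ≤ c ∧ ∃ δ' : Matrix κ κ ℂ, IsIncoherent δ' ∧ K * δ * Kᴴ = (c : ℂ) • δ'

/-- An incoherent operation (IO). -/
def IsIO (Λ : Matrix ι ι ℂ →ₗ[ℂ] Matrix κ κ ℂ) : Prop :=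
  ∃ (N : ℕ) (K : Fin N → Matrix κ ι ℂ),
    (∀ n, IncoherentPreserving (K n)) ∧ (∑ n, (K n)ᴴ * K n = 1) ∧
    ∀ ρ, Λ ρ = ∑ n, K n * ρ * (K n)ᴴ

/-- A strictly incoherent operation (SIO). -/
def IsSIO (Λ : Matrix ι ι ℂ →ₗ[ℂ] Matrix κ κ ℂ) : Prop :=
  ∃ (N : ℕ) (K : Fin N → Matrix κ ι ℂ),
    (∀ n, IncoherentPreserving (K n)) ∧ (∀ n, IncoherentPreserving (K n)ᴴ) ∧
    (∑ n, (K n)ᴴ * K n = 1) ∧ ∀ ρ, Λ ρ = ∑ n, K n * ρ * (K n)ᴴ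

/-- The outer product `|ψ⟩⟨ψ|`. -/
def outer (ψ : ι → ℂ) : Matrix ι ι ℂ := Matrix.of fun i j => ψ i * star (ψ j)

/-- `T ψ` is the number of nonzero computational-basis coefficients of `ψ`. -/
noncomputable def T (ψ : ι → ℂ) : ℕ := (Finset.univ.filter fun i => ψ i ≠ 0).card

/-- A finite pure-state decomposition `ρ = Σ_j p_j |ψ_j⟩⟨ψ_j|`. -/
def IsDecomposition (ρ : Matrix ι ι ℂ) (n : ℕ) (p : Fin n → ℝ) (ψ : Fin n → ι → ℂ) : Prop :=
  (∀ j, 0 < p j) ∧ (∑ j, p j = 1) ∧ (∀ j, ∑ i, Complex.normSq (ψ j i) = 1) ∧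
    ρ = ∑ j, p j • outer (ψ j)

/-- `C_0(ρ) = min over decompositions of max_j log₂ T(ψ_j)`. -/
noncomputable def C0 (ρ : Matrix ι ι ℂ) : ℝ :=
  sInf { r | ∃ n p ψ, IsDecomposition ρ n p ψ ∧
    r = Real.logb 2 (↑(Finset.univ.sup fun j => T (ψ j)) : ℝ) }

/-- Matrix square root of a positive semidefinite matrix (junk value `0` elsewhere). -/
noncomputable def msqrt (A : Matrix ι ι ℂ) : Matrix ι ι ℂ :=
  letI := Classical.propDecidable A.PosSemidef
  if h : A.PosSemidef then
    (h.1.eigenvectorUnitary : Matrix ι ι ℂ) *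
      Matrix.diagonal ((↑) ∘ (Real.sqrt ·) ∘ h.1.eigenvalues) *
      (star h.1.eigenvectorUnitary : Matrix ι ι ℂ)
  else 0

/-- Uhlmann fidelity `F(ρ,σ) = (Tr √(√ρ σ √ρ))²`. -/
noncomputable def Fid (ρ σ : Matrix ι ι ℂ) : ℝ :=
  ((msqrt (msqrt ρ * σ * msqrt ρ)).trace.re) ^ 2

/-- Smoothed `C_max`. -/
noncomputable def Cmaxeps (ρ : Matrix ι ι ℂ) (ε : ℝ) : ℝ :=
  sInf { r | ∃ ρ', IsState ρ' ∧ 1 - ε ≤ Fid ρ ρ' ∧ r = Cmax ρ' }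

/-- Smoothed `C_{Δ,max}`. -/
noncomputable def CDmaxeps (ρ : Matrix ι ι ℂ) (ε : ℝ) : ℝ :=
  sInf { r | ∃ ρ', IsState ρ' ∧ 1 - ε ≤ Fid ρ ρ' ∧ r = CDmax ρ' }

/-- Smoothed `C_0`. -/
noncomputable def C0eps (ρ : Matrix ι ι ℂ) (ε : ℝ) : ℝ :=
  sInf { r | ∃ ρ', IsState ρ' ∧ 1 - ε ≤ Fid ρ ρ' ∧ r = C0 ρ' }

/-- The maximally coherent state `Ψ_M = |Ψ_M⟩⟨Ψ_M|` of dimension `M`. -/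
noncomputable def PsiM (M : ℕ) : Matrix (Fin M) (Fin M) ℂ := Matrix.of fun _ _ => (1 : ℂ) / M

/-- One-shot coherence cost under MIO. -/
noncomputable def CMIOeps (ρ : Matrix ι ι ℂ) (ε : ℝ) : ℝ :=
  sInf { r | ∃ M : ℕ, 1 ≤ M ∧ r = Real.logb 2 M ∧
    ∃ Λ : Matrix (Fin M) (Fin M) ℂ →ₗ[ℂ] Matrix ι ι ℂ, IsMIO Λ ∧ 1 - ε ≤ Fid ρ (Λ (PsiM M)) }

/-- One-shot coherence cost under DIO. -/
noncomputable def CDIOeps (ρ : Matrix ι ι ℂ) (ε : ℝ) : ℝ :=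
  sInf { r | ∃ M : ℕ, 1 ≤ M ∧ r = Real.logb 2 M ∧
    ∃ Λ : Matrix (Fin M) (Fin M) ℂ →ₗ[ℂ] Matrix ι ι ℂ,
      CompletelyPositive Λ ∧ TracePreserving Λ ∧ (∀ ω, Λ (dephase ω) = dephase (Λ ω)) ∧
      1 - ε ≤ Fid ρ (Λ (PsiM M)) }

/-- One-shot coherence cost under IO. -/
noncomputable def CIOeps (ρ : Matrix ι ι ℂ) (ε : ℝ) : ℝ :=
  sInf { r | ∃ M : ℕ, 1 ≤ M ∧ r = Real.logb 2 M ∧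
    ∃ Λ : Matrix (Fin M) (Fin M) ℂ →ₗ[ℂ] Matrix ι ι ℂ, IsIO Λ ∧ 1 - ε ≤ Fid ρ (Λ (PsiM M)) }

/-- One-shot coherence cost under SIO. -/
noncomputable def CSIOeps (ρ : Matrix ι ι ℂ) (ε : ℝ) : ℝ :=
  sInf { r | ∃ M : ℕ, 1 ≤ M ∧ r = Real.logb 2 M ∧
    ∃ Λ : Matrix (Fin M) (Fin M) ℂ →ₗ[ℂ] Matrix ι ι ℂ, IsSIO Λ ∧ 1 - ε ≤ Fid ρ (Λ (PsiM M)) }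

/-- Matrix logarithm (base 2) via the spectral decomposition, with `log₂ 0 = 0` junk
convention on the kernel, and junk value `0` on non-Hermitian matrices. -/
noncomputable def mlog2 (A : Matrix ι ι ℂ) : Matrix ι ι ℂ :=
  letI := Classical.propDecidable A.IsHermitian
  if h : A.IsHermitian then
    (h.eigenvectorUnitary : Matrix ι ι ℂ) *
      Matrix.diagonal (fun i => (Real.logb 2 (h.eigenvalues i) : ℂ)) *
      (h.eigenvectorUnitary : Matrix ι ι ℂ)ᴴ
  else 0

/-- The relative entropy of coherence `C_r(ρ) = min_{δ ∈ 𝓘} S(ρ‖δ)`, where the minimum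
is (equivalently) restricted to those `δ` whose support contains the support of `ρ`,
on which `S(ρ‖δ) = Tr[ρ (log₂ ρ − log₂ δ)]` is finite. -/
noncomputable def Cr (ρ : Matrix ι ι ℂ) : ℝ :=
  sInf { r | ∃ δ, IsIncoherent δ ∧ (∀ v : ι → ℂ, δ.mulVec v = 0 → ρ.mulVec v = 0) ∧
    r = ((ρ * (mlog2 ρ - mlog2 δ)).trace).re }

/-- Von Neumann entropy (base 2). -/
noncomputable def vN (σ : Matrix ι ι ℂ) : ℝ := -((σ * mlog2 σ).trace.re)

/-- The coherence of formation. -/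
noncomputable def Cf (ρ : Matrix ι ι ℂ) : ℝ :=
  sInf { r | ∃ n p ψ, IsDecomposition ρ n p ψ ∧
    r = ∑ j, p j * vN (dephase (outer (ψ j))) }

/-- The set `A_ρ = { (1/t)[(1+t)Δ(ρ) − ρ] : t > 0, (1+t)Δ(ρ) − ρ ≥ 0 }`. -/
def Aset (ρ : Matrix ι ι ℂ) : Set (Matrix ι ι ℂ) :=
  { σ | ∃ t : ℝ, 0 < t ∧ ((1 + t) • dephase ρ - ρ).PosSemidef ∧
      σ = t⁻¹ • ((1 + t) • dephase ρ - ρ) }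

/-- The `n`-fold tensor power `ρ^{⊗ n}`. -/
def tpow (ρ : Matrix ι ι ℂ) (n : ℕ) : Matrix (Fin n → ι) (Fin n → ι) ℂ :=
  Matrix.of fun i j => ∏ t, ρ (i t) (j t)


section Aux

set_option linter.unusedSectionVars false
set_option maxHeartbeats 1000000
open scoped MatrixOrder

lemma msqrt_eq_sqrt {A : Matrix ι ι ℂ} (hA : A.PosSemidef) : msqrt A = CFC.sqrt A := by
  rw [CFC.sqrt_eq_cfc, cfc_nnreal_eq_real _ A, hA.1.cfc_eq]
  unfold msqrt
  rw [dif_pos hA]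
  simp only [Matrix.IsHermitian.cfc, Unitary.conjStarAlgAut_apply]
  congr 3
  funext i
  simp [Real.coe_sqrt, hA.eigenvalues_nonneg i]

lemma msqrt_mul_self {A : Matrix ι ι ℂ} (hA : A.PosSemidef) : msqrt A * msqrt A = A := by
  rw [msqrt_eq_sqrt hA]; exact CFC.sqrt_mul_sqrt_self A hA.nonneg

lemma msqrt_psd {A : Matrix ι ι ℂ} (hA : A.PosSemidef) : (msqrt A).PosSemidef := by
  rw [msqrt_eq_sqrt hA]; exact Matrix.nonneg_iff_posSemidef.1 (CFC.sqrt_nonneg A)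

lemma psd_smul_real {A : Matrix ι ι ℂ} (hA : A.PosSemidef) {c : ℝ} (hc : 0 ≤ c) :
    ((c : ℂ) • A).PosSemidef := by
  refine Matrix.PosSemidef.of_dotProduct_mulVec_nonneg ?_ ?_
  · unfold Matrix.IsHermitian
    rw [Matrix.conjTranspose_smul, hA.1]
    congr 1
    simp [Complex.ext_iff]
  · intro x
    rw [Matrix.smul_mulVec, dotProduct_smul, smul_eq_mul]
    exact mul_nonneg (Complex.zero_le_real.2 hc) (hA.dotProduct_mulVec_nonneg x)

lemma trace_nonneg_psd {A : Matrix ι ι ℂ} (hA : A.PosSemidef) : 0 ≤ A.trace := by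
  rw [Matrix.trace]
  apply Finset.sum_nonneg
  intro i _
  have := hA.dotProduct_mulVec_nonneg (Pi.single i 1)
  simpa [dotProduct, Matrix.mulVec, Pi.single_apply, Finset.sum_ite_eq,
    Matrix.diag] using this

lemma psd_of_cp {Λ : Matrix ι ι ℂ →ₗ[ℂ] Matrix κ κ ℂ} (hΛ : CompletelyPositive Λ)
    {N : Matrix ι ι ℂ} (hN : N.PosSemidef) : (Λ N).PosSemidef := by
  have hlift : (Matrix.of fun p q : Fin 1 × ι => N p.2 q.2).PosSemidef := by
    refine Matrix.PosSemidef.of_dotProduct_mulVec_nonneg ?_ ?_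
    · ext p q
      simp only [Matrix.conjTranspose_apply, Matrix.of_apply]
      exact congrFun (congrFun hN.1 p.2) q.2
    · intro v
      have := hN.dotProduct_mulVec_nonneg (fun x => v (0, x))
      simpa [dotProduct, Matrix.mulVec, Fintype.sum_prod_type,
        Finset.mul_sum, Finset.sum_mul] using this
  have h := hΛ 1 _ hlift
  refine Matrix.PosSemidef.of_dotProduct_mulVec_nonneg ?_ ?_
  · ext i j
    have := congrFun (congrFun h.1 (0, i)) (0, j)
    simp [Matrix.conjTranspose_apply] at this ⊢
    exact this
  · intro v
    have := h.dotProduct_mulVec_nonneg (fun p => v p.2)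
    simp [dotProduct, Matrix.mulVec, Fintype.sum_prod_type] at this ⊢
    exact this

lemma cp_add {Λ₁ Λ₂ : Matrix ι ι ℂ →ₗ[ℂ] Matrix κ κ ℂ}
    (h1 : CompletelyPositive Λ₁) (h2 : CompletelyPositive Λ₂) :
    CompletelyPositive (Λ₁ + Λ₂) := by
  intro k M hM
  have := (h1 k M hM).add (h2 k M hM)
  convert this using 1
  ext p q
  simp

/-- The map `X ↦ Tr(A X) • B`. -/
noncomputable def prepMap (A : Matrix ι ι ℂ) (B : Matrix κ κ ℂ) :
    Matrix ι ι ℂ →ₗ[ℂ] Matrix κ κ ℂ where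
  toFun X := (A * X).trace • B
  map_add' X Y := by simp only [Matrix.mul_add, Matrix.trace_add, add_smul]
  map_smul' c X := by
    simp only [Matrix.mul_smul, Matrix.trace_smul, smul_smul, RingHom.id_apply, smul_eq_mul]

lemma prepMap_apply (A : Matrix ι ι ℂ) (B : Matrix κ κ ℂ) (X : Matrix ι ι ℂ) :
    prepMap A B X = (A * X).trace • B := rfl

lemma cp_prep {A : Matrix ι ι ℂ} {B : Matrix κ κ ℂ} (hA : A.PosSemidef) (hB : B.PosSemidef) :
    CompletelyPositive (prepMap A B) := by
  intro k Mb hMb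
  set C := msqrt A with hCdef
  set D := msqrt B with hDdef
  have hC : C * C = A := msqrt_mul_self hA
  have hD : D * D = B := msqrt_mul_self hB
  have hCh : ∀ a b, star (C a b) = C b a := fun a b =>
    congrFun (congrFun (msqrt_psd hA).1 b) a
  have hDh : ∀ a b, star (D a b) = D b a := fun a b =>
    congrFun (congrFun (msqrt_psd hB).1 b) a
  set E : ι → κ → Matrix (Fin k × κ) (Fin k × ι) ℂ := fun x t =>
    Matrix.of fun p q => if p.1 = q.1 then D p.2 t * C x q.2 else 0 with hEdef
  have key : (Matrix.of fun p q : Fin k × κ =>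
      prepMap A B (Matrix.of fun x y => Mb (p.1, x) (q.1, y)) p.2 q.2)
      = ∑ x : ι, ∑ t : κ, (E x t) * Mb * (E x t)ᴴ := by
    ext p q
    rw [Matrix.sum_apply]
    simp only [Matrix.sum_apply, prepMap_apply, Matrix.of_apply, Matrix.smul_apply,
      smul_eq_mul, Matrix.trace, Matrix.diag, Matrix.mul_apply, Matrix.conjTranspose_apply,
      hEdef, Fintype.sum_prod_type]
    simp only [ite_mul, zero_mul, mul_ite, mul_zero, apply_ite star, star_zero,
      Finset.sum_ite_irrel, Finset.sum_const_zero,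
      Finset.sum_ite_eq, Finset.mem_univ, if_true, star_mul', hCh, hDh]
    rw [← hC, ← hD]
    simp only [Matrix.mul_apply, Finset.sum_mul, Finset.mul_sum]
    have step1 : ∀ (f : κ → ι → ι → ι → ℂ),
        (∑ t : κ, ∑ a : ι, ∑ b : ι, ∑ s : ι, f t a b s)
          = ∑ s : ι, ∑ t : κ, ∑ a : ι, ∑ b : ι, f t a b s := by
      intro f
      have h1 : ∀ t a, (∑ b : ι, ∑ s : ι, f t a b s) = ∑ s, ∑ b, f t a b s :=
        fun t a => Finset.sum_comm
      simp_rw [h1]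
      have h2 : ∀ t, (∑ a : ι, ∑ s : ι, ∑ b : ι, f t a b s) = ∑ s, ∑ a, ∑ b, f t a b s :=
        fun t => Finset.sum_comm
      simp_rw [h2]
      exact Finset.sum_comm
    rw [step1]
    refine Finset.sum_congr rfl fun s _ => Finset.sum_congr rfl fun t _ =>
      Finset.sum_congr rfl fun a _ => Finset.sum_congr rfl fun b _ => by ring
  rw [key]
  apply Finset.sum_induction _ _ (fun a b ha hb => ha.add hb) Matrix.PosSemidef.zero
  intro x _
  apply Finset.sum_induction _ _ (fun a b ha hb => ha.add hb) Matrix.PosSemidef.zero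
  intro t _
  exact hMb.mul_mul_conjTranspose_same (E x t)

lemma PsiM_psd (M : ℕ) : (PsiM M).PosSemidef := by
  have key : PsiM M = (Matrix.of fun (_ : Fin 1) (_ : Fin M) => ((Real.sqrt M)⁻¹ : ℂ))ᴴ *
      (Matrix.of fun (_ : Fin 1) (_ : Fin M) => ((Real.sqrt M)⁻¹ : ℂ)) := by
    ext i j
    simp only [PsiM, Matrix.of_apply, Matrix.mul_apply, Matrix.conjTranspose_apply,
      Finset.sum_const, Finset.card_univ, Fintype.card_fin, one_smul]
    rw [star_inv₀, Complex.star_def, Complex.conj_ofReal, ← mul_inv, ← Complex.ofReal_mul,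
      Real.mul_self_sqrt (Nat.cast_nonneg M), one_div]
    push_cast
    ring
  rw [key]
  exact Matrix.posSemidef_conjTranspose_mul_self _

lemma PsiM_sq {M : ℕ} (hM : 1 ≤ M) : PsiM M * PsiM M = PsiM M := by
  have hMC : ((M : ℂ)) ≠ 0 := Nat.cast_ne_zero.2 (by omega)
  ext i j
  simp only [PsiM, Matrix.of_apply, Matrix.mul_apply, Finset.sum_const,
    Finset.card_univ, Fintype.card_fin, nsmul_eq_mul]
  field_simp

lemma PsiM_trace {M : ℕ} (hM : 1 ≤ M) : (PsiM M).trace = 1 := by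
  have hMC : ((M : ℂ)) ≠ 0 := Nat.cast_ne_zero.2 (by omega)
  rw [Matrix.trace]
  simp only [Matrix.diag, PsiM, Matrix.of_apply, Finset.sum_const,
    Finset.card_univ, Fintype.card_fin, nsmul_eq_mul]
  field_simp

lemma one_sub_PsiM_psd {M : ℕ} (hM : 1 ≤ M) :
    ((1 : Matrix (Fin M) (Fin M) ℂ) - PsiM M).PosSemidef := by
  have hherm : ((1 : Matrix (Fin M) (Fin M) ℂ) - PsiM M)ᴴ = 1 - PsiM M := by
    rw [Matrix.conjTranspose_sub, Matrix.conjTranspose_one, (PsiM_psd M).1]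
  have key : ((1 : Matrix (Fin M) (Fin M) ℂ) - PsiM M)
      = ((1 : Matrix (Fin M) (Fin M) ℂ) - PsiM M)ᴴ * (1 - PsiM M) := by
    rw [hherm, Matrix.sub_mul, Matrix.one_mul, Matrix.mul_sub, Matrix.mul_one,
      PsiM_sq hM, sub_self, sub_zero]
  rw [key]
  exact Matrix.posSemidef_conjTranspose_mul_self _

lemma mem_ge_one {ρ' : Matrix ι ι ℂ} (hρ' : IsState ρ') {l : ℝ}
    (hl : l ∈ {l : ℝ | 0 ≤ l ∧ ∃ δ, IsIncoherent δ ∧ (l • δ - ρ').PosSemidef}) : 1 ≤ l := by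
  obtain ⟨hl0, δ, hδ, hpsd⟩ := hl
  have h := trace_nonneg_psd hpsd
  rw [Matrix.trace_sub, Matrix.trace_smul, hδ.1.2, hρ'.2] at h
  have h2 : (0 : ℂ) ≤ ((l - 1 : ℝ) : ℂ) := by
    convert h using 1
    push_cast [Complex.real_smul]
    ring
  rw [Complex.zero_le_real] at h2
  linarith

lemma Cmax_nonneg {ρ' : Matrix ι ι ℂ} (hρ' : IsState ρ') : 0 ≤ Cmax ρ' := by
  rw [Cmax]
  rcases Set.eq_empty_or_nonempty
    {l : ℝ | 0 ≤ l ∧ ∃ δ, IsIncoherent δ ∧ (l • δ - ρ').PosSemidef} with hS | hS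
  · rw [hS, Real.sInf_empty, Real.logb_zero]
  · exact Real.logb_nonneg one_lt_two (le_csInf hS fun l hl => mem_ge_one hρ' hl)

lemma incoh_inv_smul_one {n : ℕ} (hn : 1 ≤ n) :
    IsIncoherent (Complex.ofReal ((n : ℝ)⁻¹) • (1 : Matrix (Fin n) (Fin n) ℂ)) := by
  have hnC : ((n : ℂ)) ≠ 0 := Nat.cast_ne_zero.2 (by omega)
  refine ⟨⟨psd_smul_real Matrix.PosSemidef.one (by positivity), ?_⟩, ?_⟩
  · rw [Matrix.trace_smul, Matrix.trace_one, Fintype.card_fin, smul_eq_mul]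
    push_cast
    field_simp
  · intro i j hij
    simp [Matrix.smul_apply, Matrix.one_apply, hij]

lemma nat_smul_inv_one {n : ℕ} (hn : 1 ≤ n) :
    (n : ℝ) • (Complex.ofReal ((n : ℝ)⁻¹) • (1 : Matrix (Fin n) (Fin n) ℂ)) = 1 := by
  have hnC : ((n : ℂ)) ≠ 0 := Nat.cast_ne_zero.2 (by omega)
  ext i j
  simp only [Matrix.smul_apply, Matrix.one_apply, Complex.real_smul, smul_eq_mul]
  rcases eq_or_ne i j with rfl | hij
  · simp only [if_pos rfl, mul_one]
    push_cast
    field_simp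
  · simp [hij]

lemma Cmax_MIO_le {M : ℕ} (hM : 1 ≤ M) {Λ : Matrix (Fin M) (Fin M) ℂ →ₗ[ℂ] Matrix ι ι ℂ}
    (hΛ : IsMIO Λ) : Cmax (Λ (PsiM M)) ≤ Real.logb 2 M := by
  have hMR : ((M : ℝ)) ≠ 0 := Nat.cast_ne_zero.2 (by omega)
  have hstate : IsState (Λ (PsiM M)) :=
    ⟨psd_of_cp hΛ.1 (PsiM_psd M), by rw [hΛ.2.1, PsiM_trace hM]⟩
  set S := {l : ℝ | 0 ≤ l ∧ ∃ δ, IsIncoherent δ ∧ (l • δ - Λ (PsiM M)).PosSemidef} with hSdef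
  have hmem : ((M : ℝ)) ∈ S := by
    refine ⟨Nat.cast_nonneg M,
      Λ (Complex.ofReal ((M : ℝ)⁻¹) • 1), hΛ.2.2 _ (incoh_inv_smul_one hM), ?_⟩
    have h1 : (M : ℝ) • Λ (Complex.ofReal ((M : ℝ)⁻¹) • (1 : Matrix (Fin M) (Fin M) ℂ))
        - Λ (PsiM M)
        = Λ ((M : ℝ) • (Complex.ofReal ((M : ℝ)⁻¹) • (1 : Matrix (Fin M) (Fin M) ℂ)) - PsiM M) := by
      conv_rhs => rw [map_sub, LinearMap.map_smul_of_tower]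
    rw [h1, nat_smul_inv_one hM]
    exact psd_of_cp hΛ.1 (one_sub_PsiM_psd hM)
  have hbdd : BddBelow S := ⟨0, fun l hl => hl.1⟩
  have h1 : (1 : ℝ) ≤ sInf S := le_csInf ⟨_, hmem⟩ fun l hl => mem_ge_one hstate hl
  rw [Cmax]
  exact Real.logb_le_logb_of_le one_lt_two (by linarith) (csInf_le hbdd hmem)

lemma msqrt_of_psd {A : Matrix ι ι ℂ} (hA : A.PosSemidef) : msqrt A = CFC.sqrt A := by
  exact msqrt_eq_sqrt hA

lemma Fid_self {A : Matrix ι ι ℂ} (hA : IsState A) : Fid A A = 1 := by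
  obtain ⟨hpsd, htr⟩ := hA
  have hsq : (A * A).PosSemidef := by
    have := Matrix.posSemidef_conjTranspose_mul_self A
    rwa [hpsd.1] at this
  have h1 : msqrt A * A * msqrt A = A * A := by
    rw [msqrt_of_psd hpsd]
    set s := CFC.sqrt A with hsdef
    have hss : s * s = A := CFC.sqrt_mul_sqrt_self A hpsd.nonneg
    rw [← hss]
    simp only [mul_assoc]
  have h2 : msqrt (msqrt A * A * msqrt A) = A := by
    rw [h1, msqrt_of_psd hsq]
    exact ((CFC.sqrt_eq_iff _ _ hsq.nonneg hpsd.nonneg).2 rfl)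
  rw [Fid, h2, htr]
  norm_num

lemma one_sub_state_psd {A : Matrix ι ι ℂ} (hA : IsState A) :
    ((1 : Matrix ι ι ℂ) - A).PosSemidef := by
  obtain ⟨hpsd, htr⟩ := hA
  have h := hpsd.1
  set U : Matrix ι ι ℂ := (h.eigenvectorUnitary : Matrix ι ι ℂ) with hUdef
  have hUmem := h.eigenvectorUnitary.2
  have hUU : U * star U = 1 := Matrix.mem_unitaryGroup_iff.mp hUmem
  have hU'U : star U * U = 1 := Matrix.mem_unitaryGroup_iff'.mp hUmem
  set lam := h.eigenvalues with hlam
  have hspec : A = U * Matrix.diagonal (RCLike.ofReal ∘ lam) * star U := h.spectral_theorem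
  have hsum : ∑ i, lam i = 1 := by
    have htrA : A.trace = ∑ i, ((lam i : ℝ) : ℂ) := by
      conv_lhs => rw [hspec]
      rw [Matrix.trace_mul_cycle, hU'U, Matrix.one_mul, Matrix.trace_diagonal]
      simp [Function.comp]
    rw [htr] at htrA
    have := congrArg Complex.re htrA
    simpa [Complex.re_sum] using this.symm
  have hle : ∀ i, lam i ≤ 1 := by
    intro i
    rw [← hsum]
    exact Finset.single_le_sum (fun j _ => hpsd.eigenvalues_nonneg j) (Finset.mem_univ i)
  have key : (1 : Matrix ι ι ℂ) - A
      = U * Matrix.diagonal (fun i => ((1 - lam i : ℝ) : ℂ)) * star U := by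
    have hdiag : Matrix.diagonal (fun i => ((1 - lam i : ℝ) : ℂ))
        = 1 - Matrix.diagonal (RCLike.ofReal ∘ lam) := by
      rw [← Matrix.diagonal_one, Matrix.diagonal_sub]
      funext i
      push_cast
      simp [Function.comp]
    rw [hdiag, Matrix.mul_sub, Matrix.mul_one, Matrix.sub_mul, hUU, ← hspec]
  rw [key, Matrix.star_eq_conjTranspose]
  exact Matrix.PosSemidef.mul_mul_conjTranspose_same
    (Matrix.posSemidef_diagonal_iff.2 fun i =>
      Complex.zero_le_real.2 (by linarith [hle i])) U

end Aux

/-- lower bound of Theorem 4: `C_max^ε(ρ) ≤ C_MIO^ε(ρ)`. -/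
theorem Cmaxeps_le_CMIOeps {d : ℕ} (ρ : Matrix (Fin d) (Fin d) ℂ) (hρ : IsState ρ)
    (ε : ℝ) (hε : 0 ≤ ε) :
    Cmaxeps ρ ε ≤ CMIOeps ρ ε := by
  classical
  have hd : 0 < d := by
    rcases Nat.eq_zero_or_pos d with h0 | h0
    · exfalso
      have h1 := hρ.2
      subst h0
      rw [Matrix.trace] at h1
      simp at h1
    · exact h0
  have hdR : ((d : ℝ)) ≠ 0 := Nat.cast_ne_zero.2 hd.ne'
  have hdC : ((d : ℂ)) ≠ 0 := Nat.cast_ne_zero.2 hd.ne'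
  set M0 := d + 1 with hM0def
  have hM0 : 1 ≤ M0 := by omega
  have hM0C : ((M0 : ℂ)) ≠ 0 := Nat.cast_ne_zero.2 (by omega)
  set τ : Matrix (Fin d) (Fin d) ℂ := Complex.ofReal ((d : ℝ)⁻¹) • 1 + (1 - ρ) with hτdef
  have hτpsd : τ.PosSemidef :=
    (psd_smul_real Matrix.PosSemidef.one (by positivity)).add (one_sub_state_psd hρ)
  set σ : Matrix (Fin d) (Fin d) ℂ := Complex.ofReal ((d : ℝ)⁻¹) • τ with hσdef
  have hσpsd : σ.PosSemidef := psd_smul_real hτpsd (by positivity)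
  have hσtr : σ.trace = 1 := by
    rw [hσdef, Matrix.trace_smul, hτdef, Matrix.trace_add, Matrix.trace_smul,
      Matrix.trace_sub, Matrix.trace_one, Fintype.card_fin, hρ.2]
    simp only [smul_eq_mul]
    push_cast
    field_simp
    ring
  set Λ0 := prepMap (PsiM M0) ρ + prepMap ((1 : Matrix (Fin M0) (Fin M0) ℂ) - PsiM M0) σ
    with hΛ0def
  have hΛ0apply : ∀ X, Λ0 X = (PsiM M0 * X).trace • ρ
      + (((1 : Matrix (Fin M0) (Fin M0) ℂ) - PsiM M0) * X).trace • σ := fun X => rfl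
  have hmio : IsMIO Λ0 := by
    refine ⟨cp_add (cp_prep (PsiM_psd M0) hρ.1) (cp_prep (one_sub_PsiM_psd hM0) hσpsd), ?_, ?_⟩
    · intro X
      rw [hΛ0apply X, Matrix.trace_add, Matrix.trace_smul, Matrix.trace_smul, hρ.2, hσtr,
        Matrix.sub_mul, Matrix.trace_sub, Matrix.one_mul]
      simp only [smul_eq_mul, mul_one]
      ring
    · intro δ hδ
      have htrδ : δ.trace = 1 := hδ.1.2
      have hΨδ : (PsiM M0 * δ).trace = (M0 : ℂ)⁻¹ := by
        have hcol : ∀ i : Fin M0, (∑ j, δ j i) = δ i i := fun i =>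
          Finset.sum_eq_single i (fun j _ hj => hδ.2 hj) (fun hi => absurd (Finset.mem_univ i) hi)
        rw [Matrix.trace]
        calc ∑ i, ((PsiM M0 * δ).diag) i = ∑ i : Fin M0, ∑ j, (1 : ℂ) / M0 * δ j i := rfl
          _ = ∑ i : Fin M0, (1 : ℂ) / M0 * δ i i := by
              refine Finset.sum_congr rfl fun i _ => ?_
              rw [← Finset.mul_sum, hcol i]
          _ = (1 : ℂ) / M0 * δ.trace := by rw [← Finset.mul_sum]; rfl
          _ = (M0 : ℂ)⁻¹ := by rw [htrδ, mul_one, one_div]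
      have hrest : (((1 : Matrix (Fin M0) (Fin M0) ℂ) - PsiM M0) * δ).trace
          = 1 - (M0 : ℂ)⁻¹ := by
        rw [Matrix.sub_mul, Matrix.trace_sub, Matrix.one_mul, htrδ, hΨδ]
      rw [hΛ0apply δ, hΨδ, hrest]
      have hkey : (M0 : ℂ)⁻¹ • ρ + ((1 : ℂ) - (M0 : ℂ)⁻¹) • σ
          = Complex.ofReal ((d : ℝ)⁻¹) • (1 : Matrix (Fin d) (Fin d) ℂ) := by
        rw [hσdef, hτdef]
        match_scalars <;>
          · try simp only [hM0def]
            push_cast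
            try field_simp
            try ring
      rw [hkey]
      exact incoh_inv_smul_one hd
  have hΛ0Ψ : Λ0 (PsiM M0) = ρ := by
    have h1 : (PsiM M0 * PsiM M0).trace = 1 := by rw [PsiM_sq hM0, PsiM_trace hM0]
    have h2 : (((1 : Matrix (Fin M0) (Fin M0) ℂ) - PsiM M0) * PsiM M0).trace = 0 := by
      rw [Matrix.sub_mul, Matrix.one_mul, PsiM_sq hM0, sub_self, Matrix.trace_zero]
    rw [hΛ0apply _, h1, h2, one_smul, zero_smul, add_zero]
  rw [CMIOeps]
  refine le_csInf ⟨Real.logb 2 M0, M0, hM0, rfl, Λ0, hmio, ?_⟩ ?_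
  · rw [hΛ0Ψ, Fid_self hρ]
    linarith
  · rintro r ⟨M, hM, rfl, Λ, hΛ, hF⟩
    have hstate : IsState (Λ (PsiM M)) :=
      ⟨psd_of_cp hΛ.1 (PsiM_psd M), by rw [hΛ.2.1, PsiM_trace hM]⟩
    have hbdd : BddBelow {r | ∃ ρ', IsState ρ' ∧ 1 - ε ≤ Fid ρ ρ' ∧ r = Cmax ρ'} := by
      refine ⟨0, ?_⟩
      rintro r ⟨ρ', hρ', _, rfl⟩
      exact Cmax_nonneg hρ'
    calc Cmaxeps ρ ε ≤ Cmax (Λ (PsiM M)) :=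
          csInf_le hbdd ⟨Λ (PsiM M), hstate, hF, rfl⟩
      _ ≤ Real.logb 2 M := Cmax_MIO_le hM hΛ

end OneShot
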